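/- (Finite-precision extension of Gleason's theorem) Let (ℓ, r) be an interval map on [0,1], let α ≥ 0 satisfy r x − ℓ x ≤ α for all x ∈ [0,1], let ρ be a state on ℂ^d, and suppose that the composite assignment P ↦ [ℓ (Re (Matrix.trace (ρ * P))), r (Re (Matrix.trace (ρ * P)))] is a QIVPM on ℂ^d. If ρ' is a state on ℂ^d such that ℓ (Re (Matrix.trace (ρ * P))) ≤ Re (Matrix.trace (ρ' * P)) ≤ r (Re (Matrix.trace (ρ * P))) for every projector P, then the L2 operator norm (spectral norm) of ρ − ρ' is at most α; equivalently, every eigenvalue of the Hermitian matrix ρ − ρ' has absolute value at most α. -/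

import Mathlib

open Matrix
open scoped ComplexOrder

/-- A projector on `ℂ^d`: an idempotent, self-adjoint matrix. -/
def IsProjector {d : ℕ} (P : Matrix (Fin d) (Fin d) ℂ) : Prop :=
  P * P = P ∧ Pᴴ = P

/-- A quantum interval-valued probability measure (QIVPM) on `ℂ^d`,
given by the pair of interval-endpoint functions `L ≤ R`. -/
def IsQIVPM {d : ℕ} (L R : Matrix (Fin d) (Fin d) ℂ → ℝ) : Prop :=
  (∀ P, IsProjector P → 0 ≤ L P ∧ L P ≤ R P ∧ R P ≤ 1) ∧
  (L 0 = 0 ∧ R 0 = 0) ∧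
  (L 1 = 1 ∧ R 1 = 1) ∧
  (∀ P, IsProjector P → L (1 - P) = 1 - R P ∧ R (1 - P) = 1 - L P) ∧
  (∀ P₀ P₁, IsProjector P₀ → IsProjector P₁ → P₀ * P₁ = P₁ * P₀ →
    L P₀ + L P₁ ≤ L (P₀ + P₁ - P₀ * P₁) + L (P₀ * P₁) ∧
    R (P₀ + P₁ - P₀ * P₁) + R (P₀ * P₁) ≤ R P₀ + R P₁)

/-- A QIVPM is `δ`-deterministic if every projector's interval lies in `[0,δ]` or `[1-δ,1]`. -/
def IsDeltaDet {d : ℕ} (δ : ℝ) (L R : Matrix (Fin d) (Fin d) ℂ → ℝ) : Prop :=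
  ∀ P, IsProjector P → R P ≤ δ ∨ 1 - δ ≤ L P

/-- A QIVPM is `0`-deterministic if every projector is assigned `[0,0]` or `[1,1]`. -/
def IsZeroDet {d : ℕ} (L R : Matrix (Fin d) (Fin d) ℂ → ℝ) : Prop :=
  ∀ P, IsProjector P → (L P = 0 ∧ R P = 0) ∨ (L P = 1 ∧ R P = 1)

/-- A state (density matrix) on `ℂ^d`. -/
def IsState {d : ℕ} (ρ : Matrix (Fin d) (Fin d) ℂ) : Prop :=
  ρ.PosSemidef ∧ ρ.trace = 1

open scoped Matrix.Norms.L2Operator in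
lemma aux_diag_norm {d : ℕ} (f : Fin d → ℂ) {α : ℝ} (hα : 0 ≤ α)
    (hf : ∀ i, ‖f i‖ ≤ α) : ‖Matrix.diagonal f‖ ≤ α := by
  rw [Matrix.l2_opNorm_def]
  refine ContinuousLinearMap.opNorm_le_bound _ hα fun x => ?_
  show ‖Matrix.toEuclideanLin (Matrix.diagonal f) x‖ ≤ α * ‖x‖
  rw [Matrix.toEuclideanLin_apply]
  rw [EuclideanSpace.norm_eq, EuclideanSpace.norm_eq]
  rw [← Real.sqrt_sq hα, ← Real.sqrt_mul (sq_nonneg α)]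
  refine Real.sqrt_le_sqrt ?_
  rw [Finset.mul_sum]
  refine Finset.sum_le_sum fun i _ => ?_
  have : ((WithLp.equiv 2 (Fin d → ℂ)).symm (Matrix.diagonal f *ᵥ (WithLp.equiv 2 (Fin d → ℂ)) x)) i
      = f i * ((WithLp.equiv 2 (Fin d → ℂ)) x) i := by
    simp [Matrix.mulVec_diagonal]
  rw [show (WithLp.toLp 2 (Matrix.diagonal f *ᵥ x.ofLp)).ofLp i = f i * ((WithLp.equiv 2 (Fin d → ℂ)) x) i by simp [Matrix.mulVec_diagonal]]
  rw [norm_mul, mul_pow]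
  have h1 : ‖f i‖ ^ 2 ≤ α ^ 2 := by
    have := hf i; nlinarith [norm_nonneg (f i)]
  have h2 : (0:ℝ) ≤ ‖((WithLp.equiv 2 (Fin d → ℂ)) x) i‖ ^ 2 := sq_nonneg _
  have hx : ‖x i‖ = ‖((WithLp.equiv 2 (Fin d → ℂ)) x) i‖ := rfl
  rw [hx]
  exact mul_le_mul_of_nonneg_right h1 h2

lemma aux_trace_re_nonneg {d : ℕ} {B : Matrix (Fin d) (Fin d) ℂ} (hB : B.PosSemidef) :
    0 ≤ B.trace.re := by
  have hdiag : ∀ i, 0 ≤ (B i i).re := by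
    intro i
    have h := hB.re_dotProduct_nonneg (Pi.single i 1)
    simpa [dotProduct, mulVec, Pi.single_apply, Finset.mul_sum, apply_ite] using h
  rw [Matrix.trace]
  rw [Complex.re_sum]
  exact Finset.sum_nonneg fun i _ => hdiag i

lemma aux_proj_trace_nonneg {d : ℕ} {σ Q : Matrix (Fin d) (Fin d) ℂ}
    (hσ : σ.PosSemidef) (hQ : IsProjector Q) : 0 ≤ (Matrix.trace (σ * Q)).re := by
  have : Matrix.trace (σ * Q) = Matrix.trace (Qᴴ * σ * Q) := by
    conv_lhs => rw [← hQ.1]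
    rw [← mul_assoc, Matrix.trace_mul_comm, hQ.2, ← mul_assoc]
  rw [this]
  exact aux_trace_re_nonneg (hσ.conjTranspose_mul_mul_same Q)

lemma aux_one_sub_proj {d : ℕ} {Q : Matrix (Fin d) (Fin d) ℂ} (hQ : IsProjector Q) :
    IsProjector (1 - Q) := by
  constructor
  · rw [mul_sub, sub_mul, sub_mul, mul_one, one_mul, hQ.1]; simp
  · rw [conjTranspose_sub, conjTranspose_one, hQ.2]

lemma aux_proj_trace_mem {d : ℕ} {σ Q : Matrix (Fin d) (Fin d) ℂ}
    (hσ : IsState σ) (hQ : IsProjector Q) :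
    (Matrix.trace (σ * Q)).re ∈ Set.Icc (0:ℝ) 1 := by
  refine ⟨aux_proj_trace_nonneg hσ.1 hQ, ?_⟩
  have h2 := aux_proj_trace_nonneg hσ.1 (aux_one_sub_proj hQ)
  rw [mul_sub, mul_one, Matrix.trace_sub, hσ.2, Complex.sub_re, Complex.one_re] at h2
  linarith

lemma aux_rank_one_proj {d : ℕ} {v : Fin d → ℂ} (hv : star v ⬝ᵥ v = 1) :
    IsProjector (vecMulVec v (star v)) := by
  constructor
  · ext i j
    simp only [Matrix.mul_apply, vecMulVec_apply, Pi.star_apply]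
    have : ∑ k, v i * star (v k) * (v k * star (v j))
        = (∑ k, star (v k) * v k) * (v i * star (v j)) := by
      rw [Finset.sum_mul]
      exact Finset.sum_congr rfl fun k _ => by ring
    rw [this]
    have hv' : (∑ k, star (v k) * v k) = 1 := hv
    rw [hv', one_mul]
  · ext i j
    simp [vecMulVec_apply, mul_comm]

lemma aux_trace_rank_one {d : ℕ} (v : Fin d → ℂ) (B : Matrix (Fin d) (Fin d) ℂ) :
    Matrix.trace (B * vecMulVec v (star v)) = star v ⬝ᵥ (B *ᵥ v) := by
  simp only [Matrix.trace, Matrix.diag, Matrix.mul_apply, vecMulVec_apply, dotProduct,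
    Matrix.mulVec, Pi.star_apply]
  refine Finset.sum_congr rfl fun i _ => ?_
  rw [Finset.mul_sum]
  exact Finset.sum_congr rfl fun j _ => by ring

open scoped Matrix.Norms.L2Operator in
/-- Finite-precision extension of Gleason's theorem: any state consistent with the
interval-blurred Born measure of `ρ` is within `α` of `ρ` in the L2 operator norm
(equivalently every eigenvalue of the Hermitian matrix `ρ - ρ'` is at most `α`
in absolute value). -/
theorem gleason_finite_precision {d : ℕ} (l r : ℝ → ℝ)
    (hmap : ∀ x ∈ Set.Icc (0:ℝ) 1, 0 ≤ l x ∧ l x ≤ x ∧ x ≤ r x ∧ r x ≤ 1)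
    (α : ℝ) (hα : 0 ≤ α) (hlen : ∀ x ∈ Set.Icc (0:ℝ) 1, r x - l x ≤ α)
    (ρ : Matrix (Fin d) (Fin d) ℂ) (hρ : IsState ρ)
    (hQ : IsQIVPM (fun P => l ((Matrix.trace (ρ * P)).re))
                  (fun P => r ((Matrix.trace (ρ * P)).re)))
    (ρ' : Matrix (Fin d) (Fin d) ℂ) (hρ' : IsState ρ')
    (hcons : ∀ P, IsProjector P →
      l ((Matrix.trace (ρ * P)).re) ≤ (Matrix.trace (ρ' * P)).re ∧
      (Matrix.trace (ρ' * P)).re ≤ r ((Matrix.trace (ρ * P)).re)) :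
    ‖ρ - ρ'‖ ≤ α ∧
    ∀ (h : (ρ - ρ').IsHermitian) (i : Fin d), |h.eigenvalues i| ≤ α := by
  have hAh : (ρ - ρ').IsHermitian := hρ.1.1.sub hρ'.1.1
  have key : ∀ (h : (ρ - ρ').IsHermitian) (i : Fin d), |h.eigenvalues i| ≤ α := by
    intro h i
    set v : Fin d → ℂ := ⇑(h.eigenvectorBasis i) with hvdef
    have hv : star v ⬝ᵥ v = 1 := by
      have h1 : (inner (𝕜 := ℂ) (h.eigenvectorBasis i) (h.eigenvectorBasis i)) = 1 := by
        rw [inner_self_eq_norm_sq_to_K, h.eigenvectorBasis.orthonormal.1 i]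
        norm_num
      rw [EuclideanSpace.inner_eq_star_dotProduct, dotProduct_comm] at h1; exact h1
    set P : Matrix (Fin d) (Fin d) ℂ := vecMulVec v (star v) with hPdef
    have hPproj : IsProjector P := aux_rank_one_proj hv
    set x : ℝ := (Matrix.trace (ρ * P)).re with hxdef
    set y : ℝ := (Matrix.trace (ρ' * P)).re with hydef
    have hxmem : x ∈ Set.Icc (0:ℝ) 1 := aux_proj_trace_mem hρ hPproj
    obtain ⟨hl0, hlx, hxr, hr1⟩ := hmap x hxmem
    obtain ⟨hy1, hy2⟩ := hcons P hPproj
    have hlen' := hlen x hxmem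
    have heig : h.eigenvalues i = x - y := by
      rw [h.eigenvalues_eq i]
      have hAv : star v ⬝ᵥ ((ρ - ρ') *ᵥ v)
          = Matrix.trace (ρ * P) - Matrix.trace (ρ' * P) := by
        rw [Matrix.sub_mulVec, dotProduct_sub, hPdef, aux_trace_rank_one, aux_trace_rank_one]
      rw [show dotProduct (star ⇑(h.eigenvectorBasis i))
          ((ρ - ρ') *ᵥ ⇑(h.eigenvectorBasis i)) = star v ⬝ᵥ ((ρ - ρ') *ᵥ v) from rfl, hAv]
      simp [hxdef, hydef]
    rw [heig, abs_le]
    constructor <;> linarith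
  refine ⟨?_, key⟩
  rcases Nat.eq_zero_or_pos d with hd | hd
  · subst hd
    have : ρ - ρ' = 0 := by ext i j; exact i.elim0
    rw [this, norm_zero]
    exact hα
  · haveI : Nontrivial (Matrix (Fin d) (Fin d) ℂ) :=
      ⟨0, 1, fun hc => by
        simpa using congr_fun (congr_fun hc ⟨0, hd⟩) ⟨0, hd⟩⟩
    conv_lhs => rw [hAh.spectral_theorem, Unitary.conjStarAlgAut_apply]
    rw [mul_assoc, CStarRing.norm_mem_unitary_mul _ (hAh.eigenvectorUnitary).2,
      CStarRing.norm_mul_mem_unitary _ (Unitary.star_mem (hAh.eigenvectorUnitary).2)]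
    refine aux_diag_norm _ hα fun i => ?_
    simpa using key hAh i
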